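/- Let V be a finite set and let r and s be relations on V. Write cp(t) for the number of equivalence classes of the equivalence relation generated by a relation t, and let M(r, s) be the set of equivalence classes C of the equivalence relation generated by r such that there exist x ∈ C and y ∉ C with s(x, y) or s(y, x). Then |M(r, s)| ≤ 2·(cp(r) − cp(r ⊔ s)); equivalently, |M(r, s)| + 2·cp(r ⊔ s) ≤ 2·cp(r). -/
import Mathlib


/-- The set of components (equivalence classes of the equivalence relation
generated by `r`) merged by the edge relation `s`: those classes `C` having an
edge of `s` with exactly one endpoint in `C`. -/
def mergedComponents {V : Type*} (r s : V → V → Prop) : Set (Set V) :=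
  {C | (∃ a, C = {b | Relation.EqvGen r a b}) ∧
    ∃ x ∈ C, ∃ y, y ∉ C ∧ (s x y ∨ s y x)}

/-- Counting lemma: for a surjection `π : α → β` of finite types, the number of
elements lying in a non-singleton fiber is at most `2 (|α| - |β|)`. -/
lemma fiber_count {α β : Type*} [Fintype α] [Fintype β] (π : α → β)
    (hsurj : Function.Surjective π) :
    {a | ∃ a', a' ≠ a ∧ π a' = π a}.ncard + 2 * Fintype.card β ≤ 2 * Fintype.card α := by
  classical
  set A : Finset α := Finset.univ.filter (fun a => ∃ a', a' ≠ a ∧ π a' = π a) with hA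
  have hncard : {a | ∃ a', a' ≠ a ∧ π a' = π a}.ncard = A.card := by
    rw [Set.ncard_eq_toFinset_card']
    congr 1
    ext a
    simp [hA]
  rw [hncard]
  have h1 : A.card = ∑ b : β, (A.filter (fun a => π a = b)).card :=
    Finset.card_eq_sum_card_fiberwise (fun x _ => Finset.mem_univ _)
  have h2 : Fintype.card α = ∑ b : β, (Finset.univ.filter (fun a => π a = b)).card := by
    rw [← Finset.card_univ]
    exact Finset.card_eq_sum_card_fiberwise (fun x _ => Finset.mem_univ _)
  have h3 : 2 * Fintype.card β = ∑ _b : β, 2 := by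
    simp [Finset.sum_const, Finset.card_univ, mul_comm]
  rw [h1, h2, h3, ← Finset.sum_add_distrib, Finset.mul_sum]
  apply Finset.sum_le_sum
  intro b _
  set F : Finset α := Finset.univ.filter (fun a => π a = b) with hF
  have hsub : A.filter (fun a => π a = b) ⊆ F := by
    intro a ha
    simp only [hF, Finset.mem_filter, Finset.mem_univ, true_and]
    exact (Finset.mem_filter.mp ha).2
  have hFne : F.Nonempty := by
    obtain ⟨a, ha⟩ := hsurj b
    exact ⟨a, by simp [hF, ha]⟩
  rcases Nat.lt_or_ge F.card 2 with hlt | hge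
  · have hcard1 : F.card = 1 := le_antisymm (by omega) (Finset.card_pos.mpr hFne)
    obtain ⟨c, hc⟩ := Finset.card_eq_one.mp hcard1
    have hempty : A.filter (fun a => π a = b) = ∅ := by
      rw [Finset.eq_empty_iff_forall_notMem]
      intro a ha
      have haF : a ∈ F := hsub ha
      have haA : a ∈ A := (Finset.mem_filter.mp ha).1
      obtain ⟨a', ha'ne, ha'eq⟩ := (Finset.mem_filter.mp haA).2
      have hab : π a = b := (Finset.mem_filter.mp ha).2
      have ha'F : a' ∈ F := by simp [hF, ha'eq, hab]
      rw [hc] at haF ha'F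
      exact ha'ne ((Finset.mem_singleton.mp ha'F).trans (Finset.mem_singleton.mp haF).symm)
    rw [hempty]
    simp [hcard1]
  · have := Finset.card_le_card hsub
    omega

/-- The number of components of the `r`-graph merged by `s` is at most twice the
drop in the number of components caused by adding the edges of `s`:
`|M(r,s)| ≤ 2 (cp r - cp (r ⊔ s))`, stated as
`|M(r,s)| + 2 cp (r ⊔ s) ≤ 2 cp r`. -/
theorem statement9 {V : Type*} [Finite V] (r s : V → V → Prop) :
    (mergedComponents r s).ncard + 2 * Nat.card (Quot (r ⊔ s)) ≤
      2 * Nat.card (Quot r) := by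
  classical
  cases isEmpty_or_nonempty V with
  | inl h =>
    have h1 : IsEmpty (Quot (r ⊔ s)) := ⟨fun q => Quot.rec (fun a => h.elim a) (by intros; rfl) q⟩
    have h2 : IsEmpty (Quot r) := ⟨fun q => Quot.rec (fun a => h.elim a) (by intros; rfl) q⟩
    have h3 : mergedComponents r s = ∅ := by
      ext C
      simp only [mergedComponents, Set.mem_setOf_eq, Set.mem_empty_iff_false, iff_false]
      rintro ⟨-, x, -, -⟩
      exact h.elim x
    simp [h1, h2, h3, Nat.card_eq_zero]
  | inr hne =>
    have : Fintype V := Fintype.ofFinite V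
    have : Fintype (Quot r) := Fintype.ofFinite _
    have : Fintype (Quot (r ⊔ s)) := Fintype.ofFinite _
    -- natural surjection
    have hrs : ∀ a b, r a b → (r ⊔ s) a b := fun a b h => Or.inl h
    set π : Quot r → Quot (r ⊔ s) :=
      Quot.lift (Quot.mk (r ⊔ s)) (fun a b h => Quot.sound (hrs a b h)) with hπ
    have hπmk : ∀ a : V, π (Quot.mk r a) = Quot.mk (r ⊔ s) a := fun a => rfl
    have hsurj : Function.Surjective π := by
      intro q
      induction q using Quot.ind with
      | _ a => exact ⟨Quot.mk r a, rfl⟩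
    -- injection of merged components into non-singleton-fiber classes
    have key : (mergedComponents r s).ncard ≤
        {q : Quot r | ∃ q', q' ≠ q ∧ π q' = π q}.ncard := by
      have : Nonempty (Quot r) := ⟨Quot.mk r (Classical.arbitrary V)⟩
      set f : Set V → Quot r := fun C =>
        if h : ∃ a, C = {b | Relation.EqvGen r a b} then Quot.mk r h.choose
        else Classical.arbitrary (Quot r) with hf
      apply Set.ncard_le_ncard_of_injOn f
      · rintro C ⟨hex, x, hx, y, hy, hsxy⟩
        rw [hf]
        simp only [dif_pos hex]
        set a := hex.choose with ha
        have hCa : C = {b | Relation.EqvGen r a b} := hex.choose_spec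
        refine ⟨Quot.mk r y, ?_, ?_⟩
        · intro hcon
          have : Relation.EqvGen r a y := Quot.eq.mp hcon.symm
          exact hy (by rw [hCa]; exact this)
        · have hax : Relation.EqvGen r a x := by rw [hCa] at hx; exact hx
          have h1 : Quot.mk r a = Quot.mk r x := Quot.eq.mpr hax
          show Quot.mk (r ⊔ s) y = Quot.mk (r ⊔ s) a
          have h2 : Quot.mk (r ⊔ s) x = Quot.mk (r ⊔ s) a := by
            have := congrArg π h1
            rw [hπmk, hπmk] at this
            exact this.symm
          rw [← h2]
          rcases hsxy with h | h
          · exact (Quot.sound (r := r ⊔ s) (Or.inr h)).symm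
          · exact Quot.sound (r := r ⊔ s) (Or.inr h)
      · rintro C₁ ⟨hex₁, -⟩ C₂ ⟨hex₂, -⟩ hfeq
        rw [hf] at hfeq
        simp only [dif_pos hex₁, dif_pos hex₂] at hfeq
        have h12 : Relation.EqvGen r hex₁.choose hex₂.choose := Quot.eq.mp hfeq
        rw [hex₁.choose_spec, hex₂.choose_spec]
        ext b
        constructor
        · exact fun hb => (h12.symm _ _).trans _ _ _ hb
        · exact fun hb => h12.trans _ _ _ hb
    have hfc := fiber_count π hsurj
    rw [Nat.card_eq_fintype_card, Nat.card_eq_fintype_card]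
    omega
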